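/- arXiv:0802.1959 — 3 statements merged into one kernel-verified Lean document; each statement's English description precedes it below -/
import Mathlib

section
/- Consider the map Φ : ℝ² → ℝ² given by Φ(X, Y) = (Y, max(0, Y) − X). Then Φ⁵ is the identity map on ℝ². -/
def Phi : ℝ × ℝ → ℝ × ℝ := fun p => (p.2, max 0 p.2 - p.1)

theorem Phi_five_periodic : ∀ p : ℝ × ℝ, Phi^[5] p = p := by
  rintro ⟨x, y⟩
  show Phi (Phi (Phi (Phi (Phi (x, y))))) = (x, y)
  simp only [Phi, max_def]
  split_ifs <;> simp <;> first | (constructor <;> linarith) | linarith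
end

section
/- Every solution (W_n) in ℝ of the recurrence W_{n+1} + W_{n−1} = max(W_n, 0) is periodic with period 5, i.e., W_{n+5} = W_n for all n. -/
lemma ud_key (a b c d e : ℝ) (hc : c = max b 0 - a) (hd : d = max c 0 - b)
    (he : e = max d 0 - c) : max e 0 - d = a := by
  rcases max_cases b 0 with ⟨p1, q1⟩ | ⟨p1, q1⟩ <;> rw [p1] at hc <;>
    rcases max_cases c 0 with ⟨p2, q2⟩ | ⟨p2, q2⟩ <;> rw [p2] at hd <;>
    rcases max_cases d 0 with ⟨p3, q3⟩ | ⟨p3, q3⟩ <;> rw [p3] at he <;>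
    rcases max_cases e 0 with ⟨p4, q4⟩ | ⟨p4, q4⟩ <;> rw [p4] <;> linarith

theorem ud_recurrence_five_periodic (W : ℤ → ℝ)
    (h : ∀ n : ℤ, W (n + 1) + W (n - 1) = max (W n) 0) :
    ∀ n : ℤ, W (n + 5) = W n := by
  intro n
  have h1 := h (n + 1)
  have h2 := h (n + 2)
  have h3 := h (n + 3)
  have h4 := h (n + 4)
  have e1 : n + 1 + 1 = n + 2 := by ring
  have e2 : n + 2 + 1 = n + 3 := by ring
  have e3 : n + 3 + 1 = n + 4 := by ring
  have e4 : n + 4 + 1 = n + 5 := by ring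
  have s1 : n + 1 - 1 = n := by ring
  have s2 : n + 2 - 1 = n + 1 := by ring
  have s3 : n + 3 - 1 = n + 2 := by ring
  have s4 : n + 4 - 1 = n + 3 := by ring
  rw [e1, s1] at h1
  rw [e2, s2] at h2
  rw [e3, s3] at h3
  rw [e4, s4] at h4
  have key := ud_key (W n) (W (n + 1)) (W (n + 2)) (W (n + 3)) (W (n + 4))
    (by linarith) (by linarith) (by linarith)
  linarith
end

section
/- Fix W₀ ∈ ℝ. The function δ ↦ W₄(W₀, δ), where W₄ is the fourth iterate of the recurrence W_{n+1} = max(W_n, 0) − W_{n−1} with initial data (W₀, δ), equals max(0, W₀) − δ for all δ with 0 < |δ| < |W₀| (assuming W₀ ≠ 0), and hence is differentiable at δ = 0 with derivative −1. -/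
/-- One step of the recurrence W_{n+1} = max(W_n, 0) − W_{n−1}, acting on pairs
(W_{n−1}, W_n) ↦ (W_n, W_{n+1}). -/
def udStep : ℝ × ℝ → ℝ × ℝ := fun p => (p.2, max p.2 0 - p.1)

lemma ud_key_s16 (W₀ : ℝ) (hW₀ : W₀ ≠ 0) (δ : ℝ) (h2 : |δ| < |W₀|) :
    (udStep^[3] (W₀, δ)).2 = max 0 W₀ - δ := by
  show (udStep (udStep (udStep (W₀, δ)))).2 = max 0 W₀ - δ
  simp only [udStep]
  rcases lt_or_gt_of_ne hW₀ with h | h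
  · rcases le_or_gt δ 0 with hδ | hδ
    · rw [max_eq_right hδ, max_eq_left (show (0:ℝ) ≤ 0 - W₀ by linarith),
        max_eq_left (show (0:ℝ) ≤ 0 - W₀ - δ by linarith), max_eq_left h.le]
      ring
    · rw [max_eq_left hδ.le, max_eq_left (show (0:ℝ) ≤ δ - W₀ by linarith),
        max_eq_left (show (0:ℝ) ≤ δ - W₀ - δ by linarith), max_eq_left h.le]
      ring
  · rw [abs_of_pos h] at h2
    rcases abs_lt.mp h2 with ⟨ha, hb⟩
    rcases le_or_gt δ 0 with hδ | hδ
    · rw [max_eq_right hδ, max_eq_right (show (0:ℝ) - W₀ ≤ 0 by linarith),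
        max_eq_left (show (0:ℝ) ≤ 0 - δ by linarith), max_eq_right h.le]
      ring
    · rw [max_eq_left hδ.le, max_eq_right (show δ - W₀ ≤ 0 by linarith),
        max_eq_right (show (0:ℝ) - δ ≤ 0 by linarith), max_eq_right h.le]
      ring

theorem ud_fourth_iterate_differentiable (W₀ : ℝ) (hW₀ : W₀ ≠ 0) :
    (∀ δ : ℝ, 0 < |δ| → |δ| < |W₀| →
      (udStep^[3] (W₀, δ)).2 = max 0 W₀ - δ) ∧
    HasDerivAt (fun δ : ℝ => (udStep^[3] (W₀, δ)).2) (-1) 0 := by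
  constructor
  · intro δ _ h2
    exact ud_key_s16 W₀ hW₀ δ h2
  · have hd : HasDerivAt (fun δ : ℝ => max 0 W₀ - δ) (-1) 0 := by
      simpa [Pi.sub_def] using (hasDerivAt_const (0:ℝ) (max 0 W₀)).sub (hasDerivAt_id 0)
    refine hd.congr_of_eventuallyEq ?_
    have hpos : 0 < |W₀| := abs_pos.mpr hW₀
    filter_upwards [Metric.ball_mem_nhds (0:ℝ) hpos] with δ hδ
    rw [Metric.mem_ball, Real.dist_eq, sub_zero] at hδ
    exact ud_key_s16 W₀ hW₀ δ hδ
end
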